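/- Let P ⊆ ℝⁿ be a polytope with vertex v such that the linear functional w is uniquely maximized over P at v. Then for all sufficiently small ε > 0, the polytope P′ = P ∩ {x : wᵀx ≤ wᵀv − ε} has the same vertex set as P except that v is removed and for each edge of P incident to v, a new vertex is created on the relative interior of that edge; all vertices of P other than v remain vertices of P′. -/

import Mathlib

open Set

variable {n : ℕ}

/-- The linear functional x ↦ ∑ i, w i * x i. -/
def linW (w : Fin n → ℝ) : (Fin n → ℝ) →ₗ[ℝ] ℝ where
  toFun x := ∑ i, w i * x i
  map_add' y z := by simp [mul_add, Finset.sum_add_distrib]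
  map_smul' c y := by simp [Finset.mul_sum, mul_left_comm]

lemma linW_apply (w x : Fin n → ℝ) : linW w x = ∑ i, w i * x i := rfl

/-- The union of {x} with points z ∈ P such that x is an interior point of a segment
from z into P is an extreme subset of P (the minimal face of x). -/
lemma isExtreme_minFace {P : Set (Fin n → ℝ)} (hconv : Convex ℝ P) {x : Fin n → ℝ}
    (hx : x ∈ P) :
    IsExtreme ℝ P {z | z = x ∨ (z ∈ P ∧ ∃ z' ∈ P, x ∈ openSegment ℝ z z')} := by
  constructor
  · rintro z (rfl | ⟨hz, -⟩) <;> assumption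
  · have key : ∀ y₁ ∈ P, ∀ y₂ ∈ P, ∀ z ∈ {z | z = x ∨ (z ∈ P ∧ ∃ z' ∈ P, x ∈ openSegment ℝ z z')},
        z ∈ openSegment ℝ y₁ y₂ →
        y₁ ∈ {z | z = x ∨ (z ∈ P ∧ ∃ z' ∈ P, x ∈ openSegment ℝ z z')} := by
      intro y₁ h₁ y₂ h₂ z hz hseg
      rcases hz with rfl | ⟨hzP, z', hz'P, hxseg⟩
      · exact Or.inr ⟨h₁, y₂, h₂, hseg⟩
      · obtain ⟨a, b, ha, hb, hab, hx'⟩ := hxseg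
        obtain ⟨p, q, hp, hq, hpq, hz'⟩ := hseg
        have ha1 : a < 1 := by linarith
        have hp1 : p ≤ 1 := by linarith
        have hc : 0 < a * p := mul_pos ha hp
        have hc1 : a * p < 1 := by nlinarith
        have hden : (0:ℝ) < 1 - a * p := by linarith
        have hcoeff : a * q + b = 1 - a * p := by nlinarith
        set y₁' := ((a * q) / (1 - a * p)) • y₂ + (b / (1 - a * p)) • z' with hy₁'
        have hy₁'P : y₁' ∈ P := by
          apply hconv h₂ hz'P (by positivity) (by positivity)
          field_simp
          linarith
        refine Or.inr ⟨h₁, y₁', hy₁'P, ⟨a * p, 1 - a * p, hc, hden, by ring, ?_⟩⟩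
        rw [hy₁', ← hx', ← hz']
        match_scalars <;> field_simp <;> ring
    intro y₁ h₁ y₂ h₂ z hz hseg
    exact key y₁ h₁ y₂ h₂ z hz hseg

lemma lift_lemma {P : Set (Fin n → ℝ)} (hconv : Convex ℝ P)
    (l : (Fin n → ℝ) →ₗ[ℝ] ℝ) {v x y₁ y₂ : Fin n → ℝ} {β : ℝ}
    (hvP : v ∈ P) (hy₁ : y₁ ∈ P) (hy₂ : y₂ ∈ P)
    (hx : x ∈ (P ∩ {z | l z ≤ β}).extremePoints ℝ)
    (hlx : l x = β) (hlv : β < l v) (hl1 : l y₁ < β) (hl2 : l y₂ < β)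
    {γ₀ γ₁ γ₂ : ℝ} (h0 : 0 < γ₀) (h1 : 0 < γ₁) (h2 : 0 < γ₂)
    (hsum : γ₀ + γ₁ + γ₂ = 1) (hcomb : x = γ₀ • v + γ₁ • y₁ + γ₂ • y₂) :
    ∃ σ : ℝ, 0 < σ ∧ σ < 1 ∧ x = σ • v + (1 - σ) • y₁ := by
  have hd1 : (0:ℝ) < l v - l y₁ := by linarith
  have hd2 : (0:ℝ) < l v - l y₂ := by linarith
  set σ₁ : ℝ := (β - l y₁) / (l v - l y₁) with hσ₁
  set σ₂ : ℝ := (β - l y₂) / (l v - l y₂) with hσ₂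
  have hσ₁0 : 0 < σ₁ := div_pos (by linarith) hd1
  have hσ₂0 : 0 < σ₂ := div_pos (by linarith) hd2
  have hσ₁1 : σ₁ < 1 := (div_lt_one hd1).2 (by linarith)
  have hσ₂1 : σ₂ < 1 := (div_lt_one hd2).2 (by linarith)
  set q₁ := σ₁ • v + (1 - σ₁) • y₁ with hq₁
  set q₂ := σ₂ • v + (1 - σ₂) • y₂ with hq₂
  have hq₁P : q₁ ∈ P := hconv hvP hy₁ (le_of_lt hσ₁0) (by linarith) (by ring)
  have hq₂P : q₂ ∈ P := hconv hvP hy₂ (le_of_lt hσ₂0) (by linarith) (by ring)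
  have hlq₁ : l q₁ = β := by
    rw [hq₁]; simp only [map_add, map_smul, smul_eq_mul]
    rw [hσ₁]; field_simp; ring
  have hlq₂ : l q₂ = β := by
    rw [hq₂]; simp only [map_add, map_smul, smul_eq_mul]
    rw [hσ₂]; field_simp; ring
  have hlxc : γ₀ * l v + γ₁ * l y₁ + γ₂ * l y₂ = β := by
    rw [← hlx, hcomb]; simp only [map_add, map_smul, smul_eq_mul]
  set β₁ : ℝ := γ₁ / (1 - σ₁) with hβ₁
  set β₂ : ℝ := γ₂ / (1 - σ₂) with hβ₂
  have hβ₁0 : 0 < β₁ := div_pos h1 (by linarith)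
  have hβ₂0 : 0 < β₂ := div_pos h2 (by linarith)
  have h1σ₁ : 1 - σ₁ = (l v - β) / (l v - l y₁) := by rw [hσ₁]; field_simp; ring
  have h1σ₂ : 1 - σ₂ = (l v - β) / (l v - l y₂) := by rw [hσ₂]; field_simp; ring
  have hlvβ : (0:ℝ) < l v - β := by linarith
  have hne₁ : (1:ℝ) - σ₁ ≠ 0 := by linarith
  have hne₂ : (1:ℝ) - σ₂ ≠ 0 := by linarith
  have hβsum : β₁ + β₂ = 1 := by
    rw [hβ₁, hβ₂, h1σ₁, h1σ₂, div_div_eq_mul_div, div_div_eq_mul_div,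
      ← add_div, div_eq_one_iff_eq (ne_of_gt hlvβ)]
    linear_combination (l v) * hsum - hlxc
  have e1 : β₁ * (1 - σ₁) = γ₁ := by rw [hβ₁, div_mul_cancel₀ _ hne₁]
  have e2 : β₂ * (1 - σ₂) = γ₂ := by rw [hβ₂, div_mul_cancel₀ _ hne₂]
  have e0 : β₁ * σ₁ + β₂ * σ₂ = γ₀ := by
    linear_combination hβsum - e1 - e2 - hsum
  have hqx : β₁ • q₁ + β₂ • q₂ = x := by
    rw [hq₁, hq₂, hcomb, smul_add, smul_add, smul_smul, smul_smul, smul_smul, smul_smul,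
      e1, e2, ← e0]
    module
  by_cases hqq : q₁ = q₂
  · refine ⟨σ₁, hσ₁0, hσ₁1, ?_⟩
    have : x = q₁ := by
      rw [← hqx, hqq, ← add_smul, hβsum, one_smul]
    rw [this, hq₁]
  · exfalso
    have hxseg : x ∈ openSegment ℝ q₁ q₂ := ⟨β₁, β₂, hβ₁0, hβ₂0, hβsum, hqx⟩
    have := hx.2 ⟨hq₁P, le_of_eq hlq₁⟩ ⟨hq₂P, le_of_eq hlq₂⟩ hxseg
    exact hqq (this.trans (hx.2 ⟨hq₂P, le_of_eq hlq₂⟩ ⟨hq₁P, le_of_eq hlq₁⟩ (by rwa [openSegment_symm])).symm)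

lemma mem_span_of_comb {v x y : Fin n → ℝ} {σ : ℝ} (hσ : σ ≠ 1)
    (h : x = σ • v + (1 - σ) • y) : y ∈ affineSpan ℝ ({v, x} : Set (Fin n → ℝ)) := by
  have hne : (1:ℝ) - σ ≠ 0 := fun hc => hσ (by linarith [sub_eq_zero.1 hc])
  have h1 : x - v = (1 - σ) • (y - v) := by rw [h]; module
  have h2 : y = AffineMap.lineMap v x ((1 - σ)⁻¹ : ℝ) := by
    rw [AffineMap.lineMap_apply]
    simp only [vsub_eq_sub, vadd_eq_add, h1, smul_smul, inv_mul_cancel₀ hne, one_smul]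
    abel
  rw [h2]
  exact AffineMap.lineMap_mem_affineSpan_pair _ _ _

lemma mem_span_of_between {v x z : Fin n → ℝ} {a : ℝ}
    (h : x = a • z + (1 - a) • v) (ha : a ≠ 0) :
    z ∈ affineSpan ℝ ({v, x} : Set (Fin n → ℝ)) := by
  have h' : x = (1 - a) • v + (1 - (1 - a)) • z := by rw [h]; module
  exact mem_span_of_comb (by simpa using ha) h'

lemma decompose {s : Finset (Fin n → ℝ)} {v z : Fin n → ℝ} (hvs : v ∈ s)
    (hne : (s.erase v).Nonempty) (hz : z ∈ convexHull ℝ (s : Set (Fin n → ℝ))) :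
    ∃ (t : ℝ) (y : Fin n → ℝ), 0 ≤ t ∧ t ≤ 1 ∧
      y ∈ convexHull ℝ ((s.erase v : Finset (Fin n → ℝ)) : Set (Fin n → ℝ)) ∧
      z = (1 - t) • v + t • y := by
  have hcoe : (s : Set (Fin n → ℝ)) = insert v ((s.erase v : Finset (Fin n → ℝ)) : Set (Fin n → ℝ)) := by
    rw [← Finset.coe_insert, Finset.insert_erase hvs]
  rw [hcoe, convexHull_insert (by exact_mod_cast hne)] at hz
  rw [mem_convexJoin] at hz
  obtain ⟨a, ha, y, hy, hseg⟩ := hz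
  rw [Set.mem_singleton_iff] at ha
  subst ha
  obtain ⟨p, q, hp, hq, hpq, hz⟩ := hseg
  exact ⟨q, y, hq, by linarith, hy, by rw [← hz]; congr 1; rw [show (1:ℝ) - q = p by linarith]⟩

lemma extreme_point_of_cut {P : Set (Fin n → ℝ)} (hconv : Convex ℝ P)
    (l : (Fin n → ℝ) →ₗ[ℝ] ℝ) {β : ℝ} {x : Fin n → ℝ}
    (hx : x ∈ (P ∩ {z | l z ≤ β}).extremePoints ℝ) (hlt : l x < β) :
    x ∈ P.extremePoints ℝ := by
  refine ⟨hx.1.1, fun y hy z hz hseg => ?_⟩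
  obtain ⟨a, b, ha, hb, hab, hxab⟩ := hseg
  have hb' : b = 1 - a := by linarith
  subst hb'
  obtain ⟨D, hDdef⟩ : ∃ D : ℝ, D = 1 + |l y - l x| + |l z - l x| := ⟨_, rfl⟩
  have hD0 : (0:ℝ) < D := by rw [hDdef]; positivity
  obtain ⟨t, htdef⟩ : ∃ t : ℝ, t = min 1 ((β - l x) / D) := ⟨_, rfl⟩
  have ht0 : 0 < t := htdef ▸ lt_min one_pos (div_pos (by linarith) hD0)
  have ht1 : t ≤ 1 := htdef ▸ min_le_left _ _
  have htD : t ≤ (β - l x) / D := htdef ▸ min_le_right _ _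
  have key : ∀ u : Fin n → ℝ, u ∈ P → |l u - l x| ≤ D - 1 →
      (1 - t) • x + t • u ∈ P ∩ {z | l z ≤ β} := by
    intro u huP hu
    refine ⟨hconv hx.1.1 huP (by linarith) (le_of_lt ht0) (by ring), ?_⟩
    have h1 : l ((1 - t) • x + t • u) = l x + t * (l u - l x) := by
      simp only [map_add, map_smul, smul_eq_mul]; ring
    have h2 : t * (l u - l x) ≤ t * |l u - l x| :=
      mul_le_mul_of_nonneg_left (le_abs_self _) (le_of_lt ht0)
    have h4 : t * |l u - l x| ≤ ((β - l x) / D) * |l u - l x| :=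
      mul_le_mul_of_nonneg_right htD (abs_nonneg _)
    have h5 : ((β - l x) / D) * |l u - l x| ≤ ((β - l x) / D) * D := by
      apply mul_le_mul_of_nonneg_left (by linarith) (le_of_lt (div_pos (by linarith) hD0))
    have h6 : ((β - l x) / D) * D = β - l x := div_mul_cancel₀ _ (ne_of_gt hD0)
    show l ((1 - t) • x + t • u) ≤ β
    rw [h1]; linarith
  have hy' := key y hy (by rw [hDdef]; have := abs_nonneg (l z - l x); linarith)
  have hz' := key z hz (by rw [hDdef]; have := abs_nonneg (l y - l x); linarith)
  have hxseg : x ∈ openSegment ℝ ((1 - t) • x + t • y) ((1 - t) • x + t • z) := by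
    refine ⟨a, 1 - a, ha, by linarith, by ring, ?_⟩
    rw [← hxab]; match_scalars <;> ring
  obtain ⟨h₁, h₂⟩ : _ ∧ _ := ⟨hx.2 hy' hz' hxseg, hx.2 hz' hy' (by rwa [openSegment_symm])⟩
  have extract : ∀ u : Fin n → ℝ, (1 - t) • x + t • u = x → u = x := by
    intro u hu
    have h' : t • (u - x) = ((1 - t) • x + t • u) - x := by match_scalars <;> ring
    rw [hu, sub_self] at h'
    rcases smul_eq_zero.1 h' with h | h
    · exact absurd h (ne_of_gt ht0)
    · exact sub_eq_zero.1 h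
  exact extract y h₁

lemma level_gt {a b u1 u2 β : ℝ} (ha : 0 < a) (hb : 0 < b) (hab : a + b = 1)
    (h1 : u1 < β) (h : a * u1 + b * u2 = β) : β < u2 := by
  by_contra hcon
  push_neg at hcon
  have h3 : a * u1 < a * β := mul_lt_mul_of_pos_left h1 ha
  have h4 : b * u2 ≤ b * β := mul_le_mul_of_nonneg_left hcon hb.le
  have h5 : a * β + b * β = β := by rw [← add_mul, hab, one_mul]
  linarith

lemma level_lt {a b u1 u2 β : ℝ} (ha : 0 < a) (hb : 0 < b) (hab : a + b = 1)
    (h2 : β < u2) (h : a * u1 + b * u2 = β) : u1 < β := by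
  by_contra hcon
  push_neg at hcon
  have h3 : a * β ≤ a * u1 := mul_le_mul_of_nonneg_left hcon ha.le
  have h4 : b * β < b * u2 := mul_lt_mul_of_pos_left h2 hb
  have h5 : a * β + b * β = β := by rw [← add_mul, hab, one_mul]
  linarith

lemma level_eq {a b u1 u2 β : ℝ} (ha : 0 < a) (hb : 0 < b) (hab : a + b = 1)
    (h1 : u1 ≤ β) (h2 : u2 ≤ β) (h : a * u1 + b * u2 = β) : u1 = β ∧ u2 = β := by
  have h5 : a * β + b * β = β := by rw [← add_mul, hab, one_mul]
  constructor
  · by_contra hcon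
    have h6 : u1 < β := lt_of_le_of_ne h1 hcon
    have h3 : a * u1 < a * β := mul_lt_mul_of_pos_left h6 ha
    have h4 : b * u2 ≤ b * β := mul_le_mul_of_nonneg_left h2 hb.le
    linarith
  · by_contra hcon
    have h6 : u2 < β := lt_of_le_of_ne h2 hcon
    have h3 : a * u1 ≤ a * β := mul_le_mul_of_nonneg_left h1 ha.le
    have h4 : b * u2 < b * β := mul_lt_mul_of_pos_left h6 hb
    linarith

/-- E is an edge of P: a 1-dimensional extreme (face) subset of P. -/
def IsEdgeOf {n : ℕ} (P E : Set (Fin n → ℝ)) : Prop :=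
  IsExtreme ℝ P E ∧ Module.finrank ℝ (affineSpan ℝ E).direction = 1

set_option maxHeartbeats 1000000 in
/-- Cutting off the unique w-maximal vertex v of a polytope P by the half-space
{x : wᵀx ≤ wᵀv − ε} for all sufficiently small ε > 0: the vertex set of the
truncated polytope consists of all vertices of P except v, together with the new
vertices created on the relative interiors of the edges of P incident to v. -/
theorem stmt_16 (n : ℕ) (s : Finset (Fin n → ℝ)) (P : Set (Fin n → ℝ))
    (hP : P = convexHull ℝ (s : Set (Fin n → ℝ)))
    (v : Fin n → ℝ) (hv : v ∈ P.extremePoints ℝ)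
    (w : Fin n → ℝ)
    (hmax : ∀ x ∈ P, x ≠ v → (∑ i, w i * x i) < ∑ i, w i * v i) :
    ∃ ε₀ : ℝ, 0 < ε₀ ∧ ∀ ε : ℝ, 0 < ε → ε < ε₀ →
      (P ∩ {x | (∑ i, w i * x i) ≤ (∑ i, w i * v i) - ε}).extremePoints ℝ
        = (P.extremePoints ℝ \ {v}) ∪
          {x | ∃ E : Set (Fin n → ℝ), IsEdgeOf P E ∧ v ∈ E ∧
            x ∈ intrinsicInterior ℝ E ∧
            (∑ i, w i * x i) = (∑ i, w i * v i) - ε} := by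
  classical
  have hl : ∀ y : Fin n → ℝ, (∑ i, w i * y i) = linW w y := fun _ => rfl
  set l : (Fin n → ℝ) →ₗ[ℝ] ℝ := linW w with hldef
  simp only [hl] at hmax ⊢
  have hPconv : Convex ℝ P := hP ▸ convex_convexHull ℝ _
  have hvP : v ∈ P := hv.1
  have hvs : v ∈ s := by
    rw [hP] at hv; exact extremePoints_convexHull_subset hv
  by_cases hne : (s.erase v).Nonempty
  · -- main case
    set c := l v with hc
    refine ⟨(s.erase v).inf' hne (fun u => c - l u), ?_, ?_⟩
    · rw [Finset.lt_inf'_iff]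
      intro u hu
      have huP : u ∈ P := hP ▸ subset_convexHull ℝ _ (Finset.mem_coe.2 (Finset.mem_of_mem_erase hu))
      have := hmax u huP (Finset.ne_of_mem_erase hu)
      linarith
    set ε₀ := (s.erase v).inf' hne (fun u => c - l u) with hε₀
    intro ε hε hεlt
    have hβc : c - ε < c := by linarith
    have hub : ∀ y ∈ convexHull ℝ ((s.erase v : Finset (Fin n → ℝ)) : Set (Fin n → ℝ)),
        l y ≤ c - ε₀ := by
      intro y hy
      refine convexHull_min (fun u hu => ?_) (convex_halfSpace_le l.isLinear (c - ε₀)) hy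
      have := Finset.inf'_le (fun u => c - l u) hu
      simp only [mem_setOf_eq]
      linarith
    have hEsub : ((s.erase v : Finset (Fin n → ℝ)) : Set (Fin n → ℝ)) ⊆ (s : Set (Fin n → ℝ)) := by
      intro u hu
      exact Finset.mem_coe.2 (Finset.mem_of_mem_erase (Finset.mem_coe.1 hu))
    have hhullP : convexHull ℝ ((s.erase v : Finset (Fin n → ℝ)) : Set (Fin n → ℝ)) ⊆ P := by
      rw [hP]; exact convexHull_mono hEsub
    ext x
    simp only [Set.mem_union, Set.mem_diff, Set.mem_singleton_iff, Set.mem_setOf_eq]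
    constructor
    · intro hx
      have hxP : x ∈ P := hx.1.1
      have hxβ : l x ≤ c - ε := hx.1.2
      rcases lt_or_eq_of_le hxβ with hlt | heq
      · left
        refine ⟨extreme_point_of_cut hPconv l hx hlt, ?_⟩
        intro hxv
        rw [hxv] at hlt
        linarith
      · right
        -- x is on an edge through v
        obtain ⟨t, y, ht0, ht1, hyH, hxd⟩ := decompose hvs hne (hP ▸ hxP)
        have hly : l y ≤ c - ε₀ := hub y hyH
        have hyP : y ∈ P := hhullP hyH
        have hlyβ : l y < c - ε := by linarith
        have ht0' : 0 < t := by
          rcases lt_or_eq_of_le ht0 with h | h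
          · exact h
          · exfalso
            rw [← h] at hxd
            simp only [sub_zero, one_smul, zero_smul, add_zero] at hxd
            rw [hxd] at heq
            linarith
        have ht1' : t < 1 := by
          rcases lt_or_eq_of_le ht1 with h | h
          · exact h
          · exfalso
            rw [h] at hxd
            simp only [sub_self, zero_smul, one_smul, zero_add] at hxd
            rw [hxd] at heq
            linarith
        have hxv : x ≠ v := by
          intro h
          rw [h] at heq
          linarith
        have hvy : v ≠ y := by
          intro h
          rw [← h] at hly
          linarith
        set F := {z | z = x ∨ (z ∈ P ∧ ∃ z' ∈ P, x ∈ openSegment ℝ z z')} with hFdef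
        have hFext := isExtreme_minFace hPconv hxP
        have hxF : x ∈ F := Or.inl rfl
        have hxseg_vy : x ∈ openSegment ℝ v y :=
          ⟨1 - t, t, by linarith, ht0', by ring, by rw [hxd]⟩
        have hvF : v ∈ F := Or.inr ⟨hvP, y, hyP, hxseg_vy⟩
        have hyF : y ∈ F := Or.inr ⟨hyP, v, hvP, by rwa [openSegment_symm]⟩
        -- F is contained in the line through v and x
        have hFL : ∀ z ∈ F, z ∈ affineSpan ℝ ({v, x} : Set (Fin n → ℝ)) := by
          intro z hz
          rcases hz with rfl | ⟨hzP, z', hz'P, hxseg⟩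
          · exact right_mem_affineSpan_pair ℝ v _
          obtain ⟨a, b, ha, hb, hab, hxab⟩ := hxseg
          have hlxab : a * l z + b * l z' = c - ε := by
            rw [← heq, ← hxab]; simp only [map_add, map_smul, smul_eq_mul]
          rcases lt_trichotomy (l z) (c - ε) with hzlt | hzeq | hzgt
          · -- l z < c - ε, hence l z' > c - ε
            have hz'gt : c - ε < l z' := level_gt ha hb hab hzlt hlxab
            obtain ⟨μ, y₂, hμ0, hμ1, hy₂H, hz'd⟩ := decompose hvs hne (hP ▸ hz'P)
            have hly₂ : l y₂ ≤ c - ε₀ := hub y₂ hy₂H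
            have hy₂P : y₂ ∈ P := hhullP hy₂H
            have hμ1' : μ < 1 := by
              rcases lt_or_eq_of_le hμ1 with h | h
              · exact h
              · exfalso
                rw [h] at hz'd
                simp only [sub_self, zero_smul, one_smul, zero_add] at hz'd
                rw [hz'd] at hz'gt
                linarith
            rcases lt_or_eq_of_le hμ0 with hμ0' | hμ0'
            · -- 0 < μ < 1 : use the lift lemma
              have hcomb : x = (b * (1 - μ)) • v + a • z + (b * μ) • y₂ := by
                rw [← hxab, hz'd]; match_scalars <;> ring
              obtain ⟨σ, hσ0, hσ1, hxσ⟩ := lift_lemma hPconv l hvP hzP hy₂P hx heq hβc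
                hzlt (by linarith)
                (mul_pos hb (by linarith)) ha (mul_pos hb hμ0')
                (by ring_nf; linarith) hcomb
              exact mem_span_of_comb (ne_of_lt hσ1) hxσ
            · -- μ = 0 : z' = v
              rw [← hμ0'] at hz'd
              simp only [sub_zero, one_smul, zero_smul, add_zero] at hz'd
              rw [hz'd] at hxab
              exact mem_span_of_between
                (show x = a • z + (1 - a) • v by rw [← hxab]; congr 1; rw [show (1:ℝ) - a = b by linarith])
                (ne_of_gt ha)
          · -- l z = c - ε : both endpoints at level, use extremality in the cut polytope
            have hz' : l z' = c - ε := by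
              rcases lt_trichotomy (l z') (c - ε) with h | h | h
              · exact absurd (level_gt hb ha (by linarith) h
                  (show b * l z' + a * l z = c - ε by linarith)) (by linarith [hzeq])
              · exact h
              · exact absurd (level_lt ha hb hab h hlxab) (by linarith [hzeq])
            have := hx.2 ⟨hzP, le_of_eq hzeq⟩ ⟨hz'P, le_of_eq hz'⟩ ⟨a, b, ha, hb, hab, hxab⟩
            rw [this]
            exact right_mem_affineSpan_pair ℝ v x
          · -- l z > c - ε, hence l z' < c - ε; decompose z
            have hz'lt : l z' < c - ε := level_lt hb ha (by linarith) hzgt (by linarith [hlxab])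
            obtain ⟨μ, y₁, hμ0, hμ1, hy₁H, hzd⟩ := decompose hvs hne (hP ▸ hzP)
            have hly₁ : l y₁ ≤ c - ε₀ := hub y₁ hy₁H
            have hy₁P : y₁ ∈ P := hhullP hy₁H
            have hμ1' : μ < 1 := by
              rcases lt_or_eq_of_le hμ1 with h | h
              · exact h
              · exfalso
                rw [h] at hzd
                simp only [sub_self, zero_smul, one_smul, zero_add] at hzd
                rw [hzd] at hzgt
                linarith
            rcases lt_or_eq_of_le hμ0 with hμ0' | hμ0'
            · have hcomb : x = (a * (1 - μ)) • v + (a * μ) • y₁ + b • z' := by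
                rw [← hxab, hzd]; match_scalars <;> ring
              obtain ⟨σ, hσ0, hσ1, hxσ⟩ := lift_lemma hPconv l hvP hy₁P hz'P hx heq hβc
                (by linarith) hz'lt
                (mul_pos ha (by linarith)) (mul_pos ha hμ0') hb
                (by ring_nf; linarith) hcomb
              have hy₁span := mem_span_of_comb (ne_of_lt hσ1) hxσ
              have hzline : z = AffineMap.lineMap v y₁ (μ : ℝ) := by
                rw [AffineMap.lineMap_apply]
                simp only [vsub_eq_sub, vadd_eq_add]
                rw [hzd]; match_scalars <;> ring
              rw [hzline]
              exact AffineMap.lineMap_mem _ (left_mem_affineSpan_pair ℝ v x) hy₁span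
            · -- μ = 0 : z = v
              rw [← hμ0'] at hzd
              simp only [sub_zero, one_smul, zero_smul, add_zero] at hzd
              rw [hzd]
              exact left_mem_affineSpan_pair ℝ v x
        -- span of F
        have hspan : affineSpan ℝ F = affineSpan ℝ ({v, x} : Set (Fin n → ℝ)) := by
          apply le_antisymm
          · rw [affineSpan_le]
            intro z hz
            exact hFL z hz
          · apply affineSpan_mono
            intro z hz
            rcases hz with rfl | hz
            · exact hvF
            · rw [Set.mem_singleton_iff] at hz
              rw [hz]
              exact hxF
        have hrank : Module.finrank ℝ (affineSpan ℝ F).direction = 1 := by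
          rw [hspan, direction_affineSpan, vectorSpan_pair]
          exact finrank_span_singleton (by simpa [vsub_eq_sub, sub_eq_zero] using Ne.symm hxv)
        -- x lies in the intrinsic interior of F
        have hintr : x ∈ intrinsicInterior ℝ F := by
          -- the open segment (v,y) is contained in F
          have hsegF : openSegment ℝ v y ⊆ F := by
            rintro z ⟨p, r, hp, hr, hpr, hz⟩
            have hzP : z ∈ P := hz ▸ hPconv hvP hyP hp.le hr.le hpr
            have hp' : p = 1 - r := by linarith
            rcases lt_trichotomy r t with hrt | hrt | hrt
            · right
              have hden : (0:ℝ) < p := by rw [hp']; linarith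
              have hα1 : (1 - t) / p < 1 := (div_lt_one hden).2 (by rw [hp']; linarith)
              refine ⟨hzP, y, hyP, ⟨(1 - t) / p, 1 - (1 - t) / p,
                div_pos (by linarith) hden, by linarith, by ring, ?_⟩⟩
              rw [← hz, hxd, hp']
              have hne : (1:ℝ) - r ≠ 0 := by linarith
              match_scalars
              · field_simp
              · field_simp; ring
            · left
              rw [← hz, hxd, hp', hrt]
            · right
              have hr0 : (0:ℝ) < r := by linarith
              refine ⟨hzP, v, hvP, ⟨t / r, 1 - t / r,
                div_pos ht0' hr0, by rw [sub_pos, div_lt_one hr0]; exact hrt, by ring, ?_⟩⟩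
              rw [← hz, hxd, hp']
              have hne : r ≠ 0 := ne_of_gt hr0
              match_scalars
              · field_simp; ring
              · field_simp
          -- the line through v and x equals the line through v and y
          have hxline : x = AffineMap.lineMap v y (t : ℝ) := by
            rw [AffineMap.lineMap_apply]
            simp only [vsub_eq_sub, vadd_eq_add]
            rw [hxd]; match_scalars <;> ring
          have hspan2 : affineSpan ℝ ({v, x} : Set (Fin n → ℝ))
              = affineSpan ℝ ({v, y} : Set (Fin n → ℝ)) := by
            apply le_antisymm
            · rw [affineSpan_le]
              rintro z hz'
              rcases hz' with h | h
              · rw [h]; exact left_mem_affineSpan_pair ℝ v y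
              · rw [Set.mem_singleton_iff] at h
                rw [h, hxline]
                exact AffineMap.lineMap_mem_affineSpan_pair _ _ _
            · rw [affineSpan_le]
              rintro z hz'
              rcases hz' with h | h
              · rw [h]; exact left_mem_affineSpan_pair ℝ v x
              · rw [Set.mem_singleton_iff] at h
                rw [h]
                refine mem_span_of_comb (σ := 1 - t) (by intro h; exact (ne_of_gt ht0') (by linarith)) ?_
                rw [hxd]; match_scalars <;> ring
          -- an auxiliary linear functional separating along the segment
          obtain ⟨g, hgdef⟩ : ∃ g : (Fin n → ℝ) →ₗ[ℝ] ℝ,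
              g = linW (fun i => y i - v i) := ⟨_, rfl⟩
          have hδpos : 0 < g y - g v := by
            have hδ : g y - g v = ∑ i, (y i - v i) ^ 2 := by
              rw [hgdef]
              simp only [linW_apply]
              rw [← Finset.sum_sub_distrib]
              exact Finset.sum_congr rfl fun i _ => by ring
            rw [hδ]
            have hex : ∃ i, y i ≠ v i := by
              by_contra hcon
              push_neg at hcon
              exact hvy (funext fun i => (hcon i).symm)
            obtain ⟨i, hi⟩ := hex
            refine Finset.sum_pos' (fun j _ => sq_nonneg _) ⟨i, Finset.mem_univ i, ?_⟩
            exact sq_pos_of_ne_zero (sub_ne_zero.2 hi)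
          have hgx : g x = g v + t * (g y - g v) := by
            rw [hxd]; simp only [map_add, map_smul, smul_eq_mul]; ring
          have hparam : ∀ z ∈ affineSpan ℝ ({v, y} : Set (Fin n → ℝ)),
              ∃ r : ℝ, z = (1 - r) • v + r • y := by
            intro z hzm
            have hdm := AffineSubspace.vsub_mem_direction hzm (left_mem_affineSpan_pair ℝ v y)
            rw [direction_affineSpan, mem_vectorSpan_pair_rev] at hdm
            obtain ⟨r, hr⟩ := hdm
            refine ⟨r, ?_⟩
            have h1 : r • (y - v) = z - v := by simpa [vsub_eq_sub] using hr
            have h2 : z = r • (y - v) + v := by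
              rw [h1]; abel
            rw [h2]; match_scalars <;> ring
          -- conclude
          have hxF' : x ∈ affineSpan ℝ F := subset_affineSpan ℝ F hxF
          refine ⟨⟨x, hxF'⟩, ?_, rfl⟩
          have hgc : Continuous g := g.continuous_of_finiteDimensional
          have hUopen : IsOpen {p : affineSpan ℝ F | g ↑p ∈ Set.Ioo (g v) (g y)} :=
            IsOpen.preimage (hgc.comp continuous_subtype_val) isOpen_Ioo
          have hUF : {p : affineSpan ℝ F | g ↑p ∈ Set.Ioo (g v) (g y)}
              ⊆ (Subtype.val ⁻¹' F : Set (affineSpan ℝ F)) := by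
            rintro ⟨z, hzmem⟩ hzO
            simp only [Set.mem_setOf_eq, Set.mem_Ioo] at hzO
            have hzspan : z ∈ affineSpan ℝ ({v, y} : Set (Fin n → ℝ)) := by
              have h3 := hzmem
              rw [hspan, hspan2] at h3
              exact h3
            obtain ⟨r, hzr⟩ := hparam z hzspan
            have hgz : g z = g v + r * (g y - g v) := by
              rw [hzr]; simp only [map_add, map_smul, smul_eq_mul]; ring
            have hr0 : 0 < r := by nlinarith [hzO.1, hδpos]
            have hr1 : r < 1 := by nlinarith [hzO.2, hδpos]
            exact hsegF ⟨1 - r, r, by linarith, hr0, by ring, hzr.symm⟩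
          have hxU : (⟨x, hxF'⟩ : affineSpan ℝ F)
              ∈ {p : affineSpan ℝ F | g ↑p ∈ Set.Ioo (g v) (g y)} := by
            simp only [Set.mem_setOf_eq, Set.mem_Ioo]
            constructor <;> nlinarith [hδpos, ht0', ht1', hgx]
          exact interior_maximal hUF hUopen hxU
        exact ⟨F, ⟨hFext, hrank⟩, hvF, hintr, heq⟩
    · intro hx
      rcases hx with ⟨hxe, hxv⟩ | ⟨E, hE, hvE, hxi, hxβ⟩
      · -- an old vertex stays a vertex
        have hxs : x ∈ s := by
          rw [hP] at hxe; exact extremePoints_convexHull_subset hxe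
        have hxerase : x ∈ s.erase v := Finset.mem_erase.2 ⟨hxv, hxs⟩
        have hxle : l x ≤ c - ε₀ := by
          have := Finset.inf'_le (fun u => c - l u) hxerase
          linarith
        refine ⟨⟨hxe.1, by simp only [mem_setOf_eq]; linarith⟩, ?_⟩
        intro y hy z hz hseg
        exact hxe.2 hy.1 hz.1 hseg
      · -- a new vertex on an edge through v
        have hxE : x ∈ E := intrinsicInterior_subset hxi
        have hxP : x ∈ P := hE.1.1 hxE
        have hxv : x ≠ v := by
          intro h
          rw [h] at hxβ
          linarith
        refine ⟨⟨hxP, le_of_eq hxβ⟩, ?_⟩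
        intro y hy z hz hseg
        obtain ⟨hyE, hzE⟩ : _ ∧ _ := ⟨hE.1.2 hy.1 hz.1 hxE hseg, hE.1.2 hz.1 hy.1 hxE (by rw [openSegment_symm]; exact hseg)⟩
        obtain ⟨a, b, ha, hb, hab, hxab⟩ := hseg
        have hlxab : a * l y + b * l z = l x := by
          rw [← hxab]; simp only [map_add, map_smul, smul_eq_mul]
        obtain ⟨hly, hlz⟩ : l y = c - ε ∧ l z = c - ε := by
          have := level_eq ha hb hab hy.2 hz.2 (by rw [hlxab, hxβ])
          exact this
        have hd : (ℝ ∙ (x - v)) = (affineSpan ℝ E).direction := by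
          apply Submodule.eq_of_le_of_finrank_le
          · rw [Submodule.span_singleton_le_iff_mem]
            have := AffineSubspace.vsub_mem_direction
              (subset_affineSpan ℝ E hxE) (subset_affineSpan ℝ E hvE)
            simpa [vsub_eq_sub] using this
          · rw [hE.2, finrank_span_singleton (by simpa [sub_eq_zero] using hxv)]
        have key : ∀ u : Fin n → ℝ, u ∈ E → l u = c - ε → u = x := by
          intro u huE hlu
          have hmem : u - x ∈ (affineSpan ℝ E).direction := by
            have := AffineSubspace.vsub_mem_direction
              (subset_affineSpan ℝ E huE) (subset_affineSpan ℝ E hxE)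
            simpa [vsub_eq_sub] using this
          rw [← hd, Submodule.mem_span_singleton] at hmem
          obtain ⟨r, hr⟩ := hmem
          have := congrArg l hr
          simp only [map_smul, map_sub, smul_eq_mul] at this
          rw [hlu, hxβ] at this
          have hr0 : r = 0 := by
            have h7 : r * (c - ε - l v) = 0 := by rw [this]; ring
            have h8 : c - ε - l v = -ε := by rw [hc]; ring
            rw [h8, mul_neg] at h7
            have h9 : r * ε = 0 := by linarith
            rcases mul_eq_zero.1 h9 with h | h
            · exact h
            · exact absurd h (ne_of_gt hε)
          rw [hr0, zero_smul] at hr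
          exact sub_eq_zero.1 hr.symm
        exact key y hyE hly
  · -- degenerate case: s = {v}
    refine ⟨1, one_pos, fun ε hε hε1 => ?_⟩
    have hserase : s.erase v = ∅ := Finset.not_nonempty_iff_eq_empty.1 hne
    have hs1 : (s : Set (Fin n → ℝ)) = {v} := by
      ext u
      simp only [Finset.mem_coe, Set.mem_singleton_iff]
      constructor
      · intro hu
        by_contra h
        have : u ∈ s.erase v := Finset.mem_erase.2 ⟨h, hu⟩
        rw [hserase] at this
        exact absurd this (Finset.notMem_empty u)
      · rintro rfl; exact hvs
    have hPv : P = {v} := by rw [hP, hs1, convexHull_singleton]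
    ext x
    simp only [Set.mem_union, Set.mem_diff, Set.mem_singleton_iff, Set.mem_setOf_eq]
    constructor
    · rintro ⟨⟨hxP, hxβ⟩, -⟩
      rw [hPv, Set.mem_singleton_iff] at hxP
      subst hxP
      simp only [Set.mem_setOf_eq] at hxβ
      exfalso; linarith
    · rintro (⟨hxe, hxv⟩ | ⟨E, hE, hvE, hxi, hxβ⟩)
      · exfalso
        rw [hPv, extremePoints_singleton, Set.mem_singleton_iff] at hxe
        exact hxv hxe
      · exfalso
        have hEsub : E ⊆ {v} := hPv ▸ hE.1.1
        have hle : (affineSpan ℝ E).direction ≤ (affineSpan ℝ ({v} : Set (Fin n → ℝ))).direction :=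
          AffineSubspace.direction_le (affineSpan_mono ℝ hEsub)
        rw [direction_affineSpan, direction_affineSpan, vectorSpan_singleton] at hle
        have h0 : vectorSpan ℝ E = ⊥ := le_bot_iff.1 hle
        have := hE.2
        rw [direction_affineSpan, h0] at this
        simp at this
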